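/- arXiv:2108.12340 — 3 statements merged into one kernel-verified Lean document; each statement's English description precedes it below -/
import Mathlib

section
/- Let n ≥ 1 and let A ⊆ ℝ^n be a nonempty Borel set. Then the Hausdorff dimension of the product A × ℝ ⊆ ℝ^{n+1}, computed with respect to the parabolic distance, equals dim_H A + 2, where dim_H A is the Hausdorff dimension of A with respect to the Euclidean distance on ℝ^n. -/
open Set Metric MeasureTheory ENNReal Filter

noncomputable section

/-- Parabolic space: `ℝⁿ × ℝ` (space × time) with the parabolic distance. -/
def PP (n : ℕ) : Type := EuclideanSpace ℝ (Fin n) × ℝ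

namespace PP

variable {n : ℕ}

/-- Space coordinate. -/
def x (p : PP n) : EuclideanSpace ℝ (Fin n) := (show EuclideanSpace ℝ (Fin n) × ℝ from p).1

/-- Time coordinate. -/
def t (p : PP n) : ℝ := (show EuclideanSpace ℝ (Fin n) × ℝ from p).2

/-- The parabolic distance `max(|X−Y|, |t−s|^{1/2})`. -/
noncomputable instance : MetricSpace (PP n) where
  dist p q := max (dist p.x q.x) (Real.sqrt |p.t - q.t|)
  dist_self p := by simp
  dist_comm p q := by simp [dist_comm, abs_sub_comm]
  dist_triangle p q r := by
    apply max_le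
    · exact (dist_triangle p.x q.x r.x).trans
        (add_le_add (le_max_left _ _) (le_max_left _ _))
    · have h1 : Real.sqrt |p.t - r.t| ≤ Real.sqrt (|p.t - q.t| + |q.t - r.t|) :=
        Real.sqrt_le_sqrt (abs_sub_le _ _ _)
      have h2 : Real.sqrt (|p.t - q.t| + |q.t - r.t|)
          ≤ Real.sqrt |p.t - q.t| + Real.sqrt |q.t - r.t| := by
        have ha := Real.sq_sqrt (abs_nonneg (p.t - q.t))
        have hb := Real.sq_sqrt (abs_nonneg (q.t - r.t))
        have hs : |p.t - q.t| + |q.t - r.t|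
            ≤ (Real.sqrt |p.t - q.t| + Real.sqrt |q.t - r.t|) ^ 2 := by
          nlinarith [Real.sqrt_nonneg |p.t - q.t|, Real.sqrt_nonneg |q.t - r.t|]
        calc Real.sqrt (|p.t - q.t| + |q.t - r.t|)
            ≤ Real.sqrt ((Real.sqrt |p.t - q.t| + Real.sqrt |q.t - r.t|) ^ 2) :=
              Real.sqrt_le_sqrt hs
          _ = _ := Real.sqrt_sq (by positivity)
      exact (h1.trans h2).trans
        (add_le_add (le_max_right _ _) (le_max_right _ _))
  eq_of_dist_eq_zero := by
    intro p q h
    have hx : dist p.x q.x = 0 :=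
      le_antisymm (le_trans (le_max_left _ _) h.le) dist_nonneg
    have ht' : Real.sqrt |p.t - q.t| = 0 :=
      le_antisymm (le_trans (le_max_right _ _) h.le) (Real.sqrt_nonneg _)
    have ht : p.t = q.t := by
      have := (Real.sqrt_eq_zero (abs_nonneg _)).mp ht'
      exact sub_eq_zero.mp (abs_eq_zero.mp this)
    have hx' : p.x = q.x := by
      exact dist_eq_zero.mp hx
    exact Prod.ext hx' ht

instance : MeasurableSpace (PP n) := borel _

instance : BorelSpace (PP n) := ⟨rfl⟩

end PP

/-- A half-open parabolic `m`-adic cube with parameters `k` (generation),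
`j` (space indices), `jt` (time index). -/
def pcube (n m : ℕ) (k : ℤ) (j : Fin n → ℤ) (jt : ℤ) : Set (PP n) :=
  {p | (∀ i, p.x i ∈ Set.Ico ((j i : ℝ) * (m : ℝ) ^ (-k)) (((j i : ℝ) + 1) * (m : ℝ) ^ (-k))) ∧
    p.t ∈ Set.Ico ((jt : ℝ) * ((m : ℝ) ^ (-k)) ^ 2) (((jt : ℝ) + 1) * ((m : ℝ) ^ (-k)) ^ 2)}

/-- `Q` is a half-open parabolic `m`-adic cube of side length `ℓ`. -/
def IsPCube (n m : ℕ) (Q : Set (PP n)) (ℓ : ℝ) : Prop :=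
  ∃ (k : ℤ) (j : Fin n → ℤ) (jt : ℤ), ℓ = (m : ℝ) ^ (-k) ∧ Q = pcube n m k j jt

/-- The `ρ`-dimensional parabolic `m`-adic net content `M^ρ_δ`. -/
noncomputable def netContent (n m : ℕ) (ρ : ℝ) (δ : ℝ≥0∞) (E : Set (PP n)) : ℝ≥0∞ :=
  ⨅ (Q : ℕ → Set (PP n)) (ℓ : ℕ → ℝ) (_ : ∀ i, IsPCube n m (Q i) (ℓ i))
    (_ : ∀ i, ENNReal.ofReal (ℓ i) ≤ δ) (_ : E ⊆ ⋃ i, Q i),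
    ∑' i, ENNReal.ofReal (ℓ i) ^ ρ

/-- The `ρ`-dimensional Hausdorff pre-measure `H^ρ_δ` (parabolic Hausdorff content when
`δ = ∞`), in a general (e)metric space. -/
noncomputable def hContent {X : Type*} [EMetricSpace X] (ρ : ℝ) (δ : ℝ≥0∞) (E : Set X) : ℝ≥0∞ :=
  ⨅ (U : ℕ → Set X) (_ : ∀ i, EMetric.diam (U i) ≤ δ) (_ : E ⊆ ⋃ i, U i),
    ∑' i, EMetric.diam (U i) ^ ρ

end

namespace PPAux

variable {n : ℕ}

lemma PP.dist_def (p q : PP n) : dist p q = max (dist p.x q.x) (Real.sqrt |p.t - q.t|) := rfl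

def mk' (x : EuclideanSpace ℝ (Fin n)) (t : ℝ) : PP n := show EuclideanSpace ℝ (Fin n) × ℝ from (x, t)

@[simp] lemma mk'_x (x : EuclideanSpace ℝ (Fin n)) (t : ℝ) : (mk' x t).x = x := rfl
@[simp] lemma mk'_t (x : EuclideanSpace ℝ (Fin n)) (t : ℝ) : (mk' x t).t = t := rfl

lemma edist_def (p q : PP n) :
    edist p q = max (edist p.x q.x) (ENNReal.ofReal (Real.sqrt |p.t - q.t|)) := by
  rw [edist_dist, edist_dist, PP.dist_def,
    Monotone.map_max (f := ENNReal.ofReal) (fun a b hab => ENNReal.ofReal_le_ofReal hab)]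

/-- product set -/
def pr (S : Set (EuclideanSpace ℝ (Fin n))) (T : Set ℝ) : Set (PP n) := {p | p.x ∈ S ∧ p.t ∈ T}

lemma ediam_pr_le (S : Set (EuclideanSpace ℝ (Fin n))) (a b : ℝ) :
    EMetric.diam (pr S (Set.Icc a b)) ≤ max (EMetric.diam S) (ENNReal.ofReal (Real.sqrt (b - a))) := by
  apply EMetric.diam_le
  intro p hp q hq
  rw [edist_def]
  apply max_le_max
  · exact EMetric.edist_le_diam_of_mem hp.1 hq.1
  · apply ENNReal.ofReal_le_ofReal
    apply Real.sqrt_le_sqrt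
    rw [abs_sub_le_iff]
    constructor <;> [skip; skip] <;>
      · have h1 := hp.2; have h2 := hq.2; simp only [Set.mem_Icc] at h1 h2; linarith

lemma ediam_slice_le (U : Set (PP n)) (τ : ℝ) :
    EMetric.diam {x : EuclideanSpace ℝ (Fin n) | mk' x τ ∈ U} ≤ EMetric.diam U := by
  apply EMetric.diam_le
  intro x hx y hy
  calc edist x y ≤ edist (mk' x τ) (mk' y τ) := by
        rw [edist_def]; exact le_max_left _ _
    _ ≤ EMetric.diam U := EMetric.edist_le_diam_of_mem hx hy

lemma abs_t_le (U : Set (PP n)) {p q : PP n} (hp : p ∈ U) (hq : q ∈ U)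
    (hD : EMetric.diam U ≠ ⊤) : |p.t - q.t| ≤ ((EMetric.diam U).toReal) ^ 2 := by
  have h1 : edist p q ≤ EMetric.diam U := EMetric.edist_le_diam_of_mem hp hq
  have h2 : ENNReal.ofReal (Real.sqrt |p.t - q.t|) ≤ EMetric.diam U :=
    le_trans (by rw [edist_def]; exact le_max_right _ _) h1
  have h3 : Real.sqrt |p.t - q.t| ≤ (EMetric.diam U).toReal := by
    rw [← ENNReal.ofReal_le_iff_le_toReal hD]; exact h2
  nlinarith [Real.sq_sqrt (abs_nonneg (p.t - q.t)), Real.sqrt_nonneg |p.t - q.t|]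


variable {n : ℕ}

lemma core (s : ℝ) (hs : 0 ≤ s) (A : Set (EuclideanSpace ℝ (Fin n))) (r : ℝ≥0∞)
    (t : ℕ → Set (PP n)) (hcov : pr A (Set.Icc (0:ℝ) 1) ⊆ ⋃ m, t m)
    (hdiam : ∀ m, EMetric.diam (t m) ≤ min r 1) :
    (⨅ (u : ℕ → Set (EuclideanSpace ℝ (Fin n))) (_ : A ⊆ ⋃ m, u m)
      (_ : ∀ m, EMetric.diam (u m) ≤ r),
      ∑' m, ⨆ _ : (u m).Nonempty, EMetric.diam (u m) ^ s)
    ≤ ∑' m, ⨆ _ : (t m).Nonempty, EMetric.diam (t m) ^ (s + 2) := by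
  have hDne : ∀ m, EMetric.diam (t m) ≠ ∞ := fun m =>
    ((hdiam m).trans_lt (lt_of_le_of_lt (min_le_right _ _) ENNReal.one_lt_top)).ne
  set D : ℕ → ℝ≥0∞ := fun m => EMetric.diam (t m) with hD
  set a : ℕ → ℝ := fun m => sInf (PP.t '' t m) with ha
  set I : ℕ → Set ℝ := fun m => Set.Icc (a m) (a m + ((D m).toReal)^2) with hI
  set g : ℕ → ℝ → ℝ≥0∞ := fun m =>
    (I m).indicator (fun _ => ⨆ _ : (t m).Nonempty, (D m) ^ s) with hg
  set IA : ℝ≥0∞ := ⨅ (u : ℕ → Set (EuclideanSpace ℝ (Fin n))) (_ : A ⊆ ⋃ m, u m)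
      (_ : ∀ m, EMetric.diam (u m) ≤ r),
      ∑' m, ⨆ _ : (u m).Nonempty, EMetric.diam (u m) ^ s with hIA
  have step1 : ∀ τ ∈ Set.Icc (0:ℝ) 1, IA ≤ ∑' m, g m τ := by
    intro τ hτ
    set S : ℕ → Set (EuclideanSpace ℝ (Fin n)) := fun m => {x | mk' x τ ∈ t m} with hS
    have hScov : A ⊆ ⋃ m, S m := by
      intro x hx
      rcases Set.mem_iUnion.1 (hcov (show mk' x τ ∈ pr A (Set.Icc (0:ℝ) 1) from ⟨hx, hτ⟩)) with ⟨m, hm⟩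
      exact Set.mem_iUnion.2 ⟨m, hm⟩
    have hSdiam : ∀ m, EMetric.diam (S m) ≤ r :=
      fun m => (ediam_slice_le (t m) τ).trans ((hdiam m).trans (min_le_left _ _))
    refine le_trans (iInf_le_of_le S (iInf_le_of_le hScov (iInf_le_of_le hSdiam le_rfl)))
      (ENNReal.tsum_le_tsum fun m => ?_)
    refine iSup_le fun hSm => ?_
    obtain ⟨x, hx⟩ := hSm
    have htm : (t m).Nonempty := ⟨mk' x τ, hx⟩
    have hτT : τ ∈ PP.t '' t m := ⟨mk' x τ, hx, rfl⟩
    have hbdd : ∀ τ' ∈ PP.t '' t m, |τ - τ'| ≤ ((D m).toReal)^2 := by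
      rintro τ' ⟨q, hq, rfl⟩
      simpa using abs_t_le (t m) hx hq (hDne m)
    have hbddBelow : BddBelow (PP.t '' t m) := ⟨τ - ((D m).toReal)^2, fun τ' hτ' => by
      have h := hbdd τ' hτ'; rw [abs_le] at h; linarith [h.1]⟩
    have h1 : a m ≤ τ := csInf_le hbddBelow hτT
    have h2 : τ ≤ a m + ((D m).toReal)^2 := by
      have h3 : τ - ((D m).toReal)^2 ≤ a m := le_csInf ⟨τ, hτT⟩ (fun τ' hτ' => by
        have h := hbdd τ' hτ'; rw [abs_le] at h; linarith [h.2])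
      linarith
    have hmem : τ ∈ I m := ⟨h1, h2⟩
    calc EMetric.diam (S m) ^ s ≤ (D m) ^ s :=
          ENNReal.rpow_le_rpow (ediam_slice_le (t m) τ) hs
      _ = g m τ := by rw [hg]; simp only; rw [Set.indicator_of_mem hmem, iSup_pos htm]
  have vol01 : volume (Set.Icc (0:ℝ) 1) = 1 := by simp
  calc IA = IA * volume (Set.Icc (0:ℝ) 1) := by rw [vol01, mul_one]
    _ = ∫⁻ _ in Set.Icc (0:ℝ) 1, IA := (setLIntegral_const _ _).symm
    _ ≤ ∫⁻ τ in Set.Icc (0:ℝ) 1, ∑' m, g m τ := setLIntegral_mono' measurableSet_Icc step1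
    _ = ∑' m, ∫⁻ τ in Set.Icc (0:ℝ) 1, g m τ :=
        lintegral_tsum fun m => (measurable_const.indicator measurableSet_Icc).aemeasurable
    _ ≤ ∑' m, ⨆ _ : (t m).Nonempty, (D m) ^ (s + 2) := ENNReal.tsum_le_tsum fun m => ?_
  rw [hg]
  simp only
  rw [lintegral_indicator_const measurableSet_Icc, Measure.restrict_apply measurableSet_Icc]
  by_cases htm : (t m).Nonempty
  · rw [iSup_pos htm, iSup_pos htm]
    by_cases hD0 : D m = 0
    · have hv : volume (I m ∩ Set.Icc (0:ℝ) 1) = 0 := by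
        refine measure_mono_null Set.inter_subset_left ?_
        rw [hI]; simp only; rw [hD0]
        simp [Real.volume_Icc]
      rw [hv, mul_zero]
      exact zero_le
    · calc D m ^ s * volume (I m ∩ Set.Icc (0:ℝ) 1)
          ≤ D m ^ s * volume (I m) := by gcongr; exact Set.inter_subset_left
        _ = D m ^ s * ENNReal.ofReal ((D m).toReal ^ 2) := by
            rw [hI]; simp only; rw [Real.volume_Icc, add_sub_cancel_left]
        _ = D m ^ s * D m ^ (2:ℝ) := by
            rw [ENNReal.ofReal_pow ENNReal.toReal_nonneg, ENNReal.ofReal_toReal (hDne m),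
              ← ENNReal.rpow_natCast (D m) 2]
            norm_num
        _ = D m ^ (s + 2) := (ENNReal.rpow_add _ _ hD0 (hDne m)).symm
  · simp [iSup_neg htm]
lemma claimUk (s : ℝ) (hs : 0 < s) (A : Set (EuclideanSpace ℝ (Fin n)))
    (hA0 : μH[s] A = 0) (k : ℤ) : μH[s + 2] (pr A (Set.Icc (k:ℝ) ((k:ℝ) + 1))) = 0 := by
  refine le_antisymm ?_ zero_le
  rw [Measure.hausdorffMeasure_apply]
  refine iSup₂_le fun r hr => ?_
  refine ENNReal.le_of_forall_pos_le_add fun ε hε _ => ?_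
  rw [zero_add]
  have hr₀ : (0:ℝ≥0∞) < min r 1 := lt_min hr zero_lt_one
  have hr₀ne : min r 1 ≠ ∞ := ((min_le_right r 1).trans_lt ENNReal.one_lt_top).ne
  set δ : ℝ := (min r 1).toReal with hδdef
  have hδpos : 0 < δ := ENNReal.toReal_pos hr₀.ne' hr₀ne
  have hδ1 : δ ≤ 1 := by
    rw [hδdef, ← ENNReal.toReal_one]
    exact ENNReal.toReal_mono ENNReal.one_ne_top (min_le_right _ _)
  have hofδ : ENNReal.ofReal δ = min r 1 := ENNReal.ofReal_toReal hr₀ne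
  set ε₁ : ℝ≥0∞ := (ε : ℝ≥0∞) / 8 with hε₁def
  have hε₁pos : 0 < ε₁ := ENNReal.div_pos (by exact_mod_cast hε.ne') (by norm_num)
  have hε₁ne : ε₁ ≠ ∞ := by
    rw [hε₁def]
    exact (ENNReal.div_lt_top ENNReal.coe_ne_top (by norm_num)).ne
  set ε' : ℝ := ε₁.toReal with hε'def
  have hε'pos : 0 < ε' := ENNReal.toReal_pos hε₁pos.ne' hε₁ne
  have hofε' : ENNReal.ofReal ε' = ε₁ := ENNReal.ofReal_toReal hε₁ne
  -- extract a good cover of A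
  have hinf : (⨅ (u : ℕ → Set (EuclideanSpace ℝ (Fin n))) (_ : A ⊆ ⋃ m, u m)
      (_ : ∀ m, EMetric.diam (u m) ≤ ENNReal.ofReal δ),
      ∑' m, ⨆ _ : (u m).Nonempty, EMetric.diam (u m) ^ s) < ε₁ := by
    refine lt_of_le_of_lt ?_ hε₁pos
    have hδ0 : (0:ℝ≥0∞) < ENNReal.ofReal δ := by rw [hofδ]; exact hr₀
    rw [← hA0, Measure.hausdorffMeasure_apply]
    exact le_iSup₂ (f := fun (ρ : ℝ≥0∞) (_ : 0 < ρ) =>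
      ⨅ (u : ℕ → Set (EuclideanSpace ℝ (Fin n))) (_ : A ⊆ ⋃ m, u m)
        (_ : ∀ m, EMetric.diam (u m) ≤ ρ),
        ∑' m, ⨆ _ : (u m).Nonempty, EMetric.diam (u m) ^ s) (ENNReal.ofReal δ) hδ0
  simp only [iInf_lt_iff] at hinf
  obtain ⟨U, hUcov, hUdiam, hUsum⟩ := hinf
  have hUne : ∀ i, EMetric.diam (U i) ≠ ∞ := fun i =>
    ((hUdiam i).trans_lt ENNReal.ofReal_lt_top).ne
  set d : ℕ → ℝ := fun i => (EMetric.diam (U i)).toReal with hd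
  have hdnn : ∀ i, 0 ≤ d i := fun i => ENNReal.toReal_nonneg
  have hdδ : ∀ i, d i ≤ δ := fun i =>
    ENNReal.toReal_le_of_le_ofReal hδpos.le (hUdiam i)
  have hdiamU : ∀ i, EMetric.diam (U i) = ENNReal.ofReal (d i) := fun i =>
    (ENNReal.ofReal_toReal (hUne i)).symm
  set e : ℕ → ℝ := fun i => min δ ((ε' * (1/2)^(i+1)) ^ (1/s)) with he
  have hepos : ∀ i, 0 < e i := fun i =>
    lt_min hδpos (Real.rpow_pos_of_pos (by positivity) _)
  have heδ : ∀ i, e i ≤ δ := fun i => min_le_left _ _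
  have hes : ∀ i, (e i) ^ s ≤ ε' * (1/2)^(i+1) := by
    intro i
    have hX : (0:ℝ) ≤ ε' * (1/2)^(i+1) := by positivity
    calc (e i) ^ s ≤ ((ε' * (1/2)^(i+1)) ^ (1/s)) ^ s :=
          Real.rpow_le_rpow (hepos i).le (min_le_right _ _) hs.le
      _ = (ε' * (1/2)^(i+1)) ^ ((1/s) * s) := (Real.rpow_mul hX _ _).symm
      _ = ε' * (1/2)^(i+1) := by rw [one_div_mul_cancel hs.ne', Real.rpow_one]
  set η : ℕ → ℝ := fun i => max (d i) (e i) with hη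
  have hηpos : ∀ i, 0 < η i := fun i => lt_of_lt_of_le (hepos i) (le_max_right _ _)
  have hηδ : ∀ i, η i ≤ δ := fun i => max_le (hdδ i) (heδ i)
  have hηs : ∀ i, (η i) ^ s ≤ (d i) ^ s + (e i) ^ s := by
    intro i
    have h1 : (0:ℝ) ≤ (e i)^s := Real.rpow_nonneg (hepos i).le s
    have h2 : (0:ℝ) ≤ (d i)^s := Real.rpow_nonneg (hdnn i) s
    rcases max_cases (d i) (e i) with ⟨h, _⟩ | ⟨h, _⟩ <;>
      · show (max (d i) (e i) : ℝ) ^ s ≤ _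
        rw [h]; linarith
  set N : ℕ → ℕ := fun i => ⌈1/(η i)^2⌉₊ + 1 with hN
  have hNbound : ∀ i, (N i : ℝ) * (η i)^2 ≤ 3 := by
    intro i
    have h2 : (0:ℝ) < (η i)^2 := by positivity
    have h3 : (η i)^2 ≤ 1 := by nlinarith [hηδ i, hηpos i]
    have h4 : (⌈1/(η i)^2⌉₊ : ℝ) < 1/(η i)^2 + 1 := Nat.ceil_lt_add_one (by positivity)
    have h5 : (N i : ℝ) < 1/(η i)^2 + 2 := by
      show ((⌈1/(η i)^2⌉₊ + 1 : ℕ) : ℝ) < _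
      push_cast; linarith
    have h6 : (1:ℝ) ≤ 1/(η i)^2 := by rw [le_div_iff₀ h2]; linarith
    have h7 : (N i : ℝ) < 3 * (1/(η i)^2) := by linarith
    calc (N i : ℝ) * (η i)^2 ≤ (3 * (1/(η i)^2)) * (η i)^2 := by nlinarith
      _ = 3 := by rw [mul_assoc, one_div_mul_cancel h2.ne', mul_one]
  set V : ℕ × ℕ → Set (PP n) := fun ij =>
    if ij.2 < N ij.1 then
      pr (U ij.1) (Set.Icc ((k:ℝ) + ij.2*(η ij.1)^2) ((k:ℝ) + (ij.2+1)*(η ij.1)^2))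
    else ∅ with hV
  set W : ℕ → Set (PP n) := fun m => V ((Denumerable.eqv (ℕ × ℕ)).symm m) with hW
  have hVdiam : ∀ i j, EMetric.diam (V (i, j)) ≤ ENNReal.ofReal (η i) := by
    intro i j
    show EMetric.diam (if j < N i then _ else ∅) ≤ _
    by_cases hj : j < N i
    · rw [if_pos hj]
      refine (ediam_pr_le _ _ _).trans (max_le ?_ ?_)
      · rw [hdiamU i]
        exact ENNReal.ofReal_le_ofReal (le_max_left _ _)
      · have hba : ((k:ℝ) + ((j:ℝ)+1)*(η i)^2) - ((k:ℝ) + (j:ℝ)*(η i)^2) = (η i)^2 := by ring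
        rw [hba, Real.sqrt_sq (hηpos i).le]
    · rw [if_neg hj]
      exact EMetric.diam_empty.le.trans zero_le
  have Hcov : pr A (Set.Icc (k:ℝ) ((k:ℝ)+1)) ⊆ ⋃ m, W m := by
    rintro p ⟨hpA, hpt⟩
    rcases Set.mem_iUnion.1 (hUcov hpA) with ⟨i, hi⟩
    have hc : (0:ℝ) < (η i)^2 := by positivity
    have hq0 : 0 ≤ (p.t - (k:ℝ))/(η i)^2 := div_nonneg (by linarith [hpt.1]) hc.le
    set j : ℕ := ⌊(p.t - (k:ℝ))/(η i)^2⌋₊ with hj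
    have hj1 : (j:ℝ) * (η i)^2 ≤ p.t - (k:ℝ) := by
      have := mul_le_mul_of_nonneg_right (Nat.floor_le hq0) hc.le
      rwa [div_mul_cancel₀ _ hc.ne'] at this
    have hj2 : p.t - (k:ℝ) ≤ ((j:ℝ) + 1) * (η i)^2 := by
      have h := (Nat.lt_floor_add_one ((p.t - (k:ℝ))/(η i)^2)).le
      have := mul_le_mul_of_nonneg_right h hc.le
      rwa [div_mul_cancel₀ _ hc.ne'] at this
    have hjN : j < N i := by
      have h1 : (p.t - (k:ℝ))/(η i)^2 ≤ 1/(η i)^2 := by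
        gcongr
        linarith [hpt.2]
      have h2 : j ≤ ⌈1/(η i)^2⌉₊ :=
        le_trans (Nat.floor_le_floor h1) (Nat.floor_le_ceil _)
      show j < ⌈1/(η i)^2⌉₊ + 1
      omega
    refine Set.mem_iUnion.2 ⟨(Denumerable.eqv (ℕ × ℕ)) (i, j), ?_⟩
    show p ∈ V ((Denumerable.eqv (ℕ × ℕ)).symm ((Denumerable.eqv (ℕ × ℕ)) (i, j)))
    rw [Equiv.symm_apply_apply]
    show p ∈ if j < N i then pr (U i) (Set.Icc ((k:ℝ) + (j:ℝ)*(η i)^2) ((k:ℝ) + ((j:ℝ)+1)*(η i)^2)) else ∅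
    rw [if_pos hjN]
    exact ⟨hi, by constructor <;> [linarith; linarith]⟩
  have Hdiam : ∀ m, EMetric.diam (W m) ≤ r := by
    intro m
    have h := hVdiam ((Denumerable.eqv (ℕ × ℕ)).symm m).1 ((Denumerable.eqv (ℕ × ℕ)).symm m).2
    rw [Prod.mk.eta] at h
    refine h.trans ?_
    calc ENNReal.ofReal (η _) ≤ ENNReal.ofReal δ := ENNReal.ofReal_le_ofReal (hηδ _)
      _ = min r 1 := hofδ
      _ ≤ r := min_le_left _ _
  have Hsum : ∑' m, (⨆ _ : (W m).Nonempty, EMetric.diam (W m) ^ (s+2)) ≤ (ε : ℝ≥0∞) := by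
    have h1 : ∑' m, (⨆ _ : (W m).Nonempty, EMetric.diam (W m) ^ (s+2))
        = ∑' ij : ℕ × ℕ, ⨆ _ : (V ij).Nonempty, EMetric.diam (V ij) ^ (s+2) :=
      Equiv.tsum_eq ((Denumerable.eqv (ℕ × ℕ)).symm)
        (fun ij => ⨆ _ : (V ij).Nonempty, EMetric.diam (V ij) ^ (s+2))
    rw [h1, ENNReal.tsum_prod']
    have h2 : ∀ i j, (⨆ _ : (V (i,j)).Nonempty, EMetric.diam (V (i,j)) ^ (s+2))
        ≤ (if j < N i then (⨆ _ : (U i).Nonempty, ENNReal.ofReal (η i) ^ (s+2)) else 0) := by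
      intro i j
      by_cases hj : j < N i
      · rw [if_pos hj]
        refine iSup_le fun hne => ?_
        have hUi : (U i).Nonempty := by
          obtain ⟨p, hp⟩ := hne
          have hp2 : p ∈ if j < N i then pr (U i)
              (Set.Icc ((k:ℝ) + (j:ℝ)*(η i)^2) ((k:ℝ) + ((j:ℝ)+1)*(η i)^2)) else ∅ := hp
          rw [if_pos hj] at hp2
          exact ⟨p.x, hp2.1⟩
        rw [iSup_pos hUi]
        exact ENNReal.rpow_le_rpow (hVdiam i j) (by linarith)
      · have hVe : V (i,j) = ∅ := if_neg hj
        simp [hVe]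
    have h3 : ∀ i, (∑' j, ⨆ _ : (V (i,j)).Nonempty, EMetric.diam (V (i,j)) ^ (s+2))
        ≤ 3 * (⨆ _ : (U i).Nonempty, EMetric.diam (U i) ^ s)
          + 3 * ENNReal.ofReal (ε' * (1/2)^(i+1)) := by
      intro i
      refine le_trans (ENNReal.tsum_le_tsum (h2 i)) ?_
      rw [tsum_eq_sum (s := Finset.range (N i))
        (fun j hj => if_neg (by simpa using hj))]
      rw [Finset.sum_congr rfl (fun j hj => if_pos (Finset.mem_range.1 hj)),
        Finset.sum_const, Finset.card_range, nsmul_eq_mul]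
      by_cases hUi : (U i).Nonempty
      · rw [iSup_pos hUi, iSup_pos hUi, hdiamU i]
        calc (N i : ℝ≥0∞) * ENNReal.ofReal (η i) ^ (s+2)
            = ENNReal.ofReal ((N i : ℝ) * (η i)^(s+2)) := by
              rw [ENNReal.ofReal_rpow_of_nonneg (hηpos i).le (by linarith),
                ENNReal.ofReal_mul (Nat.cast_nonneg _), ENNReal.ofReal_natCast]
          _ ≤ ENNReal.ofReal (3 * (d i)^s + 3 * (ε' * (1/2)^(i+1))) := by
              apply ENNReal.ofReal_le_ofReal
              have hr1 : (η i)^(s+2) = (η i)^s * (η i)^2 := by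
                rw [Real.rpow_add (hηpos i), Real.rpow_two]
              have a1 : (N i:ℝ) * (η i)^2 ≤ 3 := hNbound i
              have a2 : (0:ℝ) ≤ (η i)^s := Real.rpow_nonneg (hηpos i).le s
              have a3 := hηs i
              have a4 := hes i
              have a5 : (0:ℝ) ≤ (N i : ℝ) := Nat.cast_nonneg _
              calc (N i:ℝ) * (η i)^(s+2) = ((N i:ℝ) * (η i)^2) * (η i)^s := by
                    rw [hr1]; ring
                _ ≤ 3 * (η i)^s := by nlinarith
                _ ≤ 3 * ((d i)^s + (e i)^s) := by nlinarith
                _ ≤ 3 * (d i)^s + 3 * (ε' * (1/2)^(i+1)) := by nlinarith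
          _ ≤ 3 * ENNReal.ofReal (d i) ^ s + 3 * ENNReal.ofReal (ε' * (1/2)^(i+1)) := by
              rw [ENNReal.ofReal_add (by positivity) (by positivity),
                ENNReal.ofReal_mul (by norm_num : (0:ℝ) ≤ 3),
                ENNReal.ofReal_mul (by norm_num : (0:ℝ) ≤ 3),
                ENNReal.ofReal_rpow_of_nonneg (hdnn i) hs.le]
              have h3' : ENNReal.ofReal (3:ℝ) = 3 := by norm_num
              rw [h3']
      · rw [iSup_neg hUi, iSup_neg hUi]
        simp
    calc ∑' i, (∑' j, ⨆ _ : (V (i,j)).Nonempty, EMetric.diam (V (i,j)) ^ (s+2))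
        ≤ ∑' i, (3 * (⨆ _ : (U i).Nonempty, EMetric.diam (U i) ^ s)
          + 3 * ENNReal.ofReal (ε' * (1/2)^(i+1))) := ENNReal.tsum_le_tsum h3
      _ = 3 * (∑' i, ⨆ _ : (U i).Nonempty, EMetric.diam (U i) ^ s)
          + 3 * (∑' i, ENNReal.ofReal (ε' * (1/2)^(i+1))) := by
          rw [ENNReal.tsum_add, ENNReal.tsum_mul_left, ENNReal.tsum_mul_left]
      _ ≤ 3 * ε₁ + 3 * ε₁ := by
          have hg2 : (∑' i, ENNReal.ofReal (ε' * (1/2:ℝ)^(i+1))) ≤ ε₁ := by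
            have hgeo : ∀ i : ℕ, ENNReal.ofReal (ε' * (1/2:ℝ)^(i+1))
                = ENNReal.ofReal ε' * (2⁻¹ : ℝ≥0∞)^(i+1) := by
              intro i
              rw [ENNReal.ofReal_mul hε'pos.le, ENNReal.ofReal_pow (by norm_num : (0:ℝ) ≤ 1/2)]
              congr 1
              rw [one_div, ENNReal.ofReal_inv_of_pos (by norm_num)]
              norm_num
            rw [tsum_congr hgeo, ENNReal.tsum_mul_left]
            have hsum2 : (∑' i : ℕ, (2⁻¹ : ℝ≥0∞)^(i+1)) = 1 := by
              have : ∀ i : ℕ, (2⁻¹ : ℝ≥0∞)^(i+1) = (2⁻¹ : ℝ≥0∞)^i * 2⁻¹ := fun i => pow_succ _ _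
              rw [tsum_congr this, ENNReal.tsum_mul_right, ENNReal.tsum_geometric,
                ENNReal.one_sub_inv_two, inv_inv]
              norm_num [ENNReal.mul_inv_cancel]
            rw [hsum2, mul_one, hofε']
          exact add_le_add (mul_le_mul_right hUsum.le 3) (mul_le_mul_right hg2 3)
      _ ≤ (ε : ℝ≥0∞) := by
          rw [hε₁def]
          calc 3 * ((ε:ℝ≥0∞)/8) + 3 * ((ε:ℝ≥0∞)/8) = 6 * ((ε:ℝ≥0∞)/8) := by ring
            _ ≤ 8 * ((ε:ℝ≥0∞)/8) := by gcongr <;> norm_num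
            _ = (ε:ℝ≥0∞) := ENNReal.mul_div_cancel' (by norm_num) (by norm_num)
  exact iInf_le_of_le W (iInf_le_of_le Hcov (iInf_le_of_le Hdiam Hsum))
lemma claimL (s : ℝ) (hs : 0 ≤ s) (A : Set (EuclideanSpace ℝ (Fin n))) :
    μH[s] A ≤ μH[s + 2] (pr A (Set.Icc (0:ℝ) 1)) := by
  rw [Measure.hausdorffMeasure_apply, Measure.hausdorffMeasure_apply]
  refine iSup₂_le fun r hr => le_iSup₂_of_le (min r 1) (lt_min hr zero_lt_one) ?_
  exact le_iInf fun t => le_iInf fun hcov => le_iInf fun hdiam => core s hs A r t hcov hdiam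

lemma claimU (s : ℝ) (hs : 0 < s) (A : Set (EuclideanSpace ℝ (Fin n)))
    (hA0 : μH[s] A = 0) : μH[s + 2] {p : PP n | p.x ∈ A} = 0 := by
  have hsub : {p : PP n | p.x ∈ A} ⊆ ⋃ k : ℤ, pr A (Set.Icc (k:ℝ) ((k:ℝ)+1)) := by
    intro p hp
    exact Set.mem_iUnion.2 ⟨⌊p.t⌋, hp, Int.floor_le _, (Int.lt_floor_add_one _).le⟩
  exact measure_mono_null hsub (measure_iUnion_null fun k => claimUk s hs A hA0 k)

lemma prsub (A : Set (EuclideanSpace ℝ (Fin n))) :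
    pr A (Set.Icc (0:ℝ) 1) ⊆ {p : PP n | p.x ∈ A} := fun p hp => hp.1

end PPAux

/-- **Parabolic dimension of a product `A × ℝ`.**
For a nonempty Borel set `A ⊆ ℝⁿ`, the Hausdorff dimension of `A × ℝ ⊆ ℝ^{n+1}` with
respect to the parabolic distance equals `dim_H A + 2`, where `dim_H A` is the (Euclidean)
Hausdorff dimension of `A`. -/
theorem dimH_prod_time_axis (n : ℕ) (hn : 1 ≤ n)
    (A : Set (EuclideanSpace ℝ (Fin n))) (hA : A.Nonempty) (hAm : MeasurableSet A) :
    dimH {p : PP n | p.x ∈ A} = dimH A + 2 := by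
  apply le_antisymm
  · refine dimH_le fun d' hd' => ?_
    by_contra hlt
    push_neg at hlt
    have h2d : (2:ℝ≥0∞) < (d' : ℝ≥0∞) := lt_of_le_of_lt le_add_self hlt
    have h2d' : (2:NNReal) ≤ d' := by exact_mod_cast h2d.le
    set s : NNReal := d' - 2 with hsdef
    have hdim : dimH A < (s : ℝ≥0∞) := by
      rw [hsdef, ENNReal.coe_sub]
      rw [show ((2:NNReal):ℝ≥0∞) = 2 by norm_cast]
      rw [lt_tsub_iff_right]
      exact hlt
    have hspos : (0:ℝ) < (s:ℝ) := by
      have : (0:NNReal) < s := tsub_pos_of_lt (by exact_mod_cast h2d)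
      exact_mod_cast this
    have h0 : μH[(s:ℝ)] A = 0 := hausdorffMeasure_of_dimH_lt hdim
    have hz := PPAux.claimU (s:ℝ) hspos A h0
    have hreal : ((d':NNReal):ℝ) = (s:ℝ) + 2 := by
      rw [hsdef, NNReal.coe_sub h2d']
      norm_num
    rw [← hreal] at hz
    rw [hz] at hd'
    exact ENNReal.zero_ne_top hd'
  · refine ENNReal.le_of_forall_nnreal_lt fun d' hd' => ?_
    have hEmono := dimH_mono (PPAux.prsub A)
    by_cases hd2 : (d' : ℝ≥0∞) ≤ 2
    · refine hd2.trans (le_trans ?_ hEmono)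
      by_contra hc
      push_neg at hc
      have hc' : dimH (PPAux.pr A (Set.Icc (0:ℝ) 1)) < ((2:NNReal) : ℝ≥0∞) := by
        exact_mod_cast hc
      have h0 := hausdorffMeasure_of_dimH_lt hc'
      have h1 : (1:ℝ≥0∞) ≤ μH[(0:ℝ)] A := Measure.one_le_hausdorffMeasure_zero_of_nonempty hA
      have h2 := (PPAux.claimL 0 le_rfl A).trans_eq
        (by rw [show (0:ℝ) + 2 = ((2:NNReal):ℝ) by norm_num] : μH[(0:ℝ) + 2]
          (PPAux.pr A (Set.Icc (0:ℝ) 1)) = μH[((2:NNReal):ℝ)] (PPAux.pr A (Set.Icc (0:ℝ) 1)))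
      rw [h0] at h2
      exact absurd (le_trans h1 h2) (by norm_num)
    · push_neg at hd2
      have h2d' : (2:NNReal) ≤ d' := by exact_mod_cast hd2.le
      set s : NNReal := d' - 2 with hsdef
      have hdim : (s : ℝ≥0∞) < dimH A := by
        rw [hsdef, ENNReal.coe_sub, show ((2:NNReal):ℝ≥0∞) = 2 by norm_cast,
          ENNReal.sub_lt_iff_lt_right (by norm_num) (by exact_mod_cast hd2.le)]
        exact hd'
      have hinf : μH[(s:ℝ)] A = ∞ := hausdorffMeasure_of_lt_dimH hdim
      have hle := PPAux.claimL (s:ℝ) s.coe_nonneg A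
      have htop : μH[((s+2 : NNReal):ℝ)] (PPAux.pr A (Set.Icc (0:ℝ) 1)) = ∞ := by
        rw [show ((s+2:NNReal):ℝ) = (s:ℝ) + 2 by push_cast; ring]
        exact top_unique (hinf ▸ hle)
      have := le_dimH_of_hausdorffMeasure_eq_top htop
      have hd'eq : (d' : ℝ≥0∞) = ((s + 2 : NNReal) : ℝ≥0∞) := by
        rw [hsdef, tsub_add_cancel_of_le h2d']
      rw [hd'eq]
      exact this.trans hEmono
end

section
/- Fix an integer n ≥ 1. Let (X₀,t₀) ∈ ℝ^n × ℝ, let r > 0 and s > 0, and set t₋₁ = t₀ − s − r²/(2n). Then the infimum of W(Y − X₀, τ − t₋₁) over all (Y,τ) in the open cylinder U_{r,s}(X₀,t₀) = {Y ∈ ℝ^n : |Y − X₀| < r} × (t₀ − s, t₀ + s) equals φ(r, r²/(2n) + 2s) = r^{−n} φ(1, 1/(2n) + 2s/r²). -/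
open Set Filter

/-- The fundamental temperature (heat kernel) `W(X,t) = (4πt)^{−n/2} exp(−|X|²/(4t))`
for `t > 0`, and `W(X,t) = 0` for `t ≤ 0`. -/
noncomputable def heatW (n : ℕ) (X : EuclideanSpace ℝ (Fin n)) (t : ℝ) : ℝ :=
  if 0 < t then (4 * Real.pi * t) ^ (-(n : ℝ) / 2) * Real.exp (-(‖X‖ ^ 2) / (4 * t)) else 0

/-- The radial profile `φ(r,t) = (4πt)^{−n/2} exp(−r²/(4t))`. -/
noncomputable def phi (n : ℕ) (r t : ℝ) : ℝ :=
  (4 * Real.pi * t) ^ (-(n : ℝ) / 2) * Real.exp (-(r ^ 2) / (4 * t))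

lemma heatW_eq (n : ℕ) (X : EuclideanSpace ℝ (Fin n)) {t : ℝ} (ht : 0 < t) :
    heatW n X t = phi n ‖X‖ t := by
  unfold heatW phi; rw [if_pos ht]

lemma phi_pos (n : ℕ) (r : ℝ) {t : ℝ} (ht : 0 < t) : 0 < phi n r t := by
  unfold phi; positivity

lemma phi_mono_r (n : ℕ) {ρ r t : ℝ} (ht : 0 < t) (h0 : 0 ≤ ρ) (h : ρ ≤ r) :
    phi n r t ≤ phi n ρ t := by
  unfold phi; gcongr

lemma phi_anti (n : ℕ) {r t₁ t₂ : ℝ} (ht₁ : 0 < t₁) (h12 : t₁ ≤ t₂)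
    (hr : r ^ 2 ≤ 2 * n * t₁) : phi n r t₂ ≤ phi n r t₁ := by
  have ht₂ : 0 < t₂ := lt_of_lt_of_le ht₁ h12
  have h1 : (0:ℝ) < 4 * Real.pi * t₁ := by positivity
  have h2 : (0:ℝ) < 4 * Real.pi * t₂ := by positivity
  rw [← Real.log_le_log_iff (phi_pos n r ht₂) (phi_pos n r ht₁)]
  unfold phi
  rw [Real.log_mul (by positivity) (Real.exp_ne_zero _), Real.log_mul (by positivity) (Real.exp_ne_zero _),
    Real.log_rpow h1, Real.log_rpow h2, Real.log_exp, Real.log_exp]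
  have hlog : 1 - t₁ / t₂ ≤ Real.log t₂ - Real.log t₁ := by
    have := Real.log_le_sub_one_of_pos (x := t₁ / t₂) (by positivity)
    rw [Real.log_div (ne_of_gt ht₁) (ne_of_gt ht₂)] at this
    linarith
  have hexp : Real.log (4 * Real.pi * t₂) - Real.log (4 * Real.pi * t₁)
      = Real.log t₂ - Real.log t₁ := by
    rw [Real.log_mul (by positivity) (ne_of_gt ht₂), Real.log_mul (by positivity) (ne_of_gt ht₁)]
    ring
  have hn0 : (0:ℝ) ≤ (n:ℝ) := Nat.cast_nonneg n
  have key : r ^ 2 / (4 * t₁) - r ^ 2 / (4 * t₂) ≤ (n:ℝ) / 2 * (Real.log t₂ - Real.log t₁) := by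
    have h3 : r ^ 2 / (4 * t₁) - r ^ 2 / (4 * t₂) = r ^ 2 * (t₂ - t₁) / (4 * t₁ * t₂) := by
      field_simp
    have h4 : r ^ 2 * (t₂ - t₁) / (4 * t₁ * t₂) ≤ (2 * n * t₁) * (t₂ - t₁) / (4 * t₁ * t₂) := by
      gcongr
    have h5 : (2 * (n:ℝ) * t₁) * (t₂ - t₁) / (4 * t₁ * t₂) = (n:ℝ) / 2 * (1 - t₁ / t₂) := by
      field_simp; ring
    calc r ^ 2 / (4 * t₁) - r ^ 2 / (4 * t₂) ≤ (2 * n * t₁) * (t₂ - t₁) / (4 * t₁ * t₂) := by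
          rw [h3]; exact h4
      _ = (n:ℝ) / 2 * (1 - t₁ / t₂) := h5
      _ ≤ (n:ℝ) / 2 * (Real.log t₂ - Real.log t₁) := by
          apply mul_le_mul_of_nonneg_left hlog (by positivity)
  have hexp2 : (n:ℝ)/2 * Real.log (4 * Real.pi * t₂) - (n:ℝ)/2 * Real.log (4 * Real.pi * t₁)
      = (n:ℝ)/2 * (Real.log t₂ - Real.log t₁) := by linear_combination ((n:ℝ)/2) * hexp
  ring_nf at key hexp2 ⊢
  linarith [key, hexp2]

lemma phi_scale (n : ℕ) {r u : ℝ} (hr : 0 < r) (hu : 0 < u) :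
    phi n r (r ^ 2 * u) = r ^ (-(n:ℝ)) * phi n 1 u := by
  unfold phi
  have h1 : 4 * Real.pi * (r ^ 2 * u) = r ^ 2 * (4 * Real.pi * u) := by ring
  rw [h1, Real.mul_rpow (by positivity) (by positivity)]
  have h2 : (r ^ 2 : ℝ) ^ (-(n:ℝ)/2) = r ^ (-(n:ℝ)) := by
    rw [← Real.rpow_natCast r 2, ← Real.rpow_mul hr.le]
    norm_num
    rw [show (2:ℝ) * (-(n:ℝ) / 2) = -(n:ℝ) by ring, Real.rpow_neg hr.le, Real.rpow_natCast]
  have h3 : -(r ^ 2) / (4 * (r ^ 2 * u)) = -(1^2) / (4 * u) := by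
    field_simp
  rw [h2, h3]
  ring


/-- **Infimum of the translated heat kernel over an open cylinder.**
With `t₋₁ = t₀ − s − r²/(2n)`, the infimum of `W(Y − X₀, τ − t₋₁)` over
`(Y,τ) ∈ U_{r,s}(X₀,t₀) = {|Y − X₀| < r} × (t₀ − s, t₀ + s)` equals
`φ(r, r²/(2n) + 2s) = r^{−n} φ(1, 1/(2n) + 2s/r²)`. -/
theorem sInf_heatW_cylinder (n : ℕ) (hn : 1 ≤ n)
    (X₀ : EuclideanSpace ℝ (Fin n)) (t₀ : ℝ) (r s : ℝ) (hr : 0 < r) (hs : 0 < s) :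
    sInf ((fun p : EuclideanSpace ℝ (Fin n) × ℝ =>
          heatW n (p.1 - X₀) (p.2 - (t₀ - s - r ^ 2 / (2 * n)))) ''
        {p : EuclideanSpace ℝ (Fin n) × ℝ |
          ‖p.1 - X₀‖ < r ∧ p.2 ∈ Set.Ioo (t₀ - s) (t₀ + s)})
      = phi n r (r ^ 2 / (2 * n) + 2 * s) ∧
    phi n r (r ^ 2 / (2 * n) + 2 * s)
      = r ^ (-(n : ℝ)) * phi n 1 (1 / (2 * n) + 2 * s / r ^ 2) := by
  have hn' : (0:ℝ) < n := by exact_mod_cast hn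
  set a : ℝ := r ^ 2 / (2 * n) with ha_def
  have ha : 0 < a := by positivity
  have hra : r ^ 2 = 2 * n * a := by rw [ha_def]; field_simp
  constructor
  · apply csInf_eq_of_forall_ge_of_forall_gt_exists_lt
    · exact ⟨_, ⟨(X₀, t₀), ⟨by simpa using hr, by constructor <;> linarith⟩, rfl⟩⟩
    · rintro v ⟨⟨Y, τ⟩, ⟨h1, h2⟩, rfl⟩
      obtain ⟨h2a, h2b⟩ := h2
      have ht : a < τ - (t₀ - s - a) := by linarith
      have htT : τ - (t₀ - s - a) ≤ a + 2 * s := by linarith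
      have htpos : 0 < τ - (t₀ - s - a) := lt_trans ha ht
      simp only [heatW_eq n _ htpos]
      calc phi n r (a + 2 * s) ≤ phi n r (τ - (t₀ - s - a)) :=
            phi_anti n htpos htT (by rw [hra]; nlinarith)
        _ ≤ phi n ‖Y - X₀‖ (τ - (t₀ - s - a)) :=
            phi_mono_r n htpos (norm_nonneg _) h1.le
    · intro w hw
      set F : ℝ → ℝ := fun u => phi n (r * u) (a + 2 * s * u) with hF_def
      have hc : ContinuousAt F 1 := by
        have hpos : (0:ℝ) < 4 * Real.pi * (a + 2 * s * 1) := by positivity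
        simp only [hF_def]
        unfold phi
        apply ContinuousAt.mul
        · exact ContinuousAt.rpow_const (by fun_prop) (Or.inl (ne_of_gt hpos))
        · exact Real.continuous_exp.continuousAt.comp
            (ContinuousAt.div (by fun_prop) (by fun_prop) (by positivity))
      have hF1 : F 1 = phi n r (a + 2 * s) := by simp [hF_def]
      have hev : ∀ᶠ u in nhds 1, F u < w := hc.tendsto.eventually_lt_const (hF1 ▸ hw)
      have hne : (nhdsWithin (1:ℝ) (Ioo (0:ℝ) 1)).NeBot := right_nhdsWithin_Ioo_neBot one_pos
      obtain ⟨u, hFu, hu0, hu1⟩ :=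
        (((hev.filter_mono (nhdsWithin_le_nhds (s := Ioo (0:ℝ) 1))).and
          self_mem_nhdsWithin).exists : ∃ u : ℝ, F u < w ∧ u ∈ Ioo (0:ℝ) 1)
      set e : EuclideanSpace ℝ (Fin n) := EuclideanSpace.single (⟨0, hn⟩ : Fin n) (1:ℝ) with he
      have hne' : ‖e‖ = 1 := by simp [he, EuclideanSpace.norm_single]
      refine ⟨_, ⟨(X₀ + (r * u) • e, t₀ - s + 2 * s * u), ⟨?_, ?_, ?_⟩, rfl⟩, ?_⟩
      · rw [add_sub_cancel_left, norm_smul, hne', mul_one, Real.norm_eq_abs,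
          abs_of_pos (by positivity)]
        nlinarith
      · simp only []
        nlinarith
      · simp only []
        nlinarith
      · have htt : (0:ℝ) < t₀ - s + 2 * s * u - (t₀ - s - a) := by nlinarith
        dsimp only
        rw [heatW_eq n _ htt, add_sub_cancel_left, norm_smul, hne', mul_one,
          Real.norm_eq_abs, abs_of_pos (by positivity : (0:ℝ) < r * u)]
        have : t₀ - s + 2 * s * u - (t₀ - s - a) = a + 2 * s * u := by ring
        rw [this]
        exact hFu
  · have hu : (0:ℝ) < 1 / (2 * n) + 2 * s / r ^ 2 := by positivity
    have h : r ^ 2 * (1 / (2 * n) + 2 * s / r ^ 2) = a + 2 * s := by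
      field_simp [ha_def]
      rw [hra]
      ring
    rw [← h, phi_scale n hr hu]
end

section
/- Potential upper bound away from the support (E3): Fix an integer n ≥ 1, let ε, δ > 0 satisfy ε/δ ≤ 1/√(6n), and let r > 0. Let K ⊆ ℝ^{n+1} be compact and let μ be a finite Borel measure on ℝ^{n+1} with support contained in K. Suppose (X,t) ∈ ℝ^{n+1} satisfies, for every (Y,s) ∈ K, max(|X − Y|, |t − s|^{1/2}) ≥ δr and t − s ≤ 3ε²r². Then the potential u(X,t) = ∫_K W(X−Y, t−s) dμ(Y,s) satisfies u(X,t) ≤ (12π)^{−n/2} e^{−n/2} (εr)^{−n} μ(K). -/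
open Set MeasureTheory

/-- `x^m e^{-x} ≤ m^m e^{-m}` for `x, m > 0`. -/
lemma rpow_mul_exp_neg_le (x m : ℝ) (hx : 0 < x) (hm : 0 < m) :
    x ^ m * Real.exp (-x) ≤ m ^ m * Real.exp (-m) := by
  have h1 : x / m ≤ Real.exp (x / m - 1) := by
    have := Real.add_one_le_exp (x / m - 1); linarith
  have h2 : (x / m) ^ m ≤ Real.exp (x / m - 1) ^ m :=
    Real.rpow_le_rpow (by positivity) h1 hm.le
  rw [Real.div_rpow hx.le hm.le, ← Real.exp_mul, div_le_iff₀ (by positivity),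
    sub_mul, div_mul_cancel₀ _ hm.ne'] at h2
  calc x ^ m * Real.exp (-x) ≤ Real.exp (x - 1 * m) * m ^ m * Real.exp (-x) := by gcongr
    _ = m ^ m * Real.exp (-m) := by
        rw [one_mul, Real.exp_sub, Real.exp_neg, Real.exp_neg]
        field_simp

lemma heatW_nonneg (n : ℕ) (Z : EuclideanSpace ℝ (Fin n)) (τ : ℝ) : 0 ≤ heatW n Z τ := by
  rw [heatW]; split_ifs with hτ
  · positivity
  · exact le_refl 0

/-- Pointwise bound on the heat kernel: if `6n ε²r² ≤ ‖Z‖²`,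
then `W(Z,τ) ≤ (12π)^{-n/2} e^{-n/2} (εr)^{-n}`. -/
lemma heatW_le (n : ℕ) (hn : 1 ≤ n) (ε r : ℝ) (hε : 0 < ε) (hr : 0 < r)
    (Z : EuclideanSpace ℝ (Fin n)) (τ : ℝ)
    (ha : 6 * n * (ε * r) ^ 2 ≤ ‖Z‖ ^ 2) :
    heatW n Z τ ≤ (12 * Real.pi) ^ (-(n : ℝ) / 2) * Real.exp (-(n : ℝ) / 2)
      * (ε * r) ^ (-(n : ℝ)) := by
  have hC : 0 ≤ (12 * Real.pi) ^ (-(n : ℝ) / 2) * Real.exp (-(n : ℝ) / 2)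
      * (ε * r) ^ (-(n : ℝ)) := by positivity
  rw [heatW]
  split_ifs with hτ
  · have hn' : (0:ℝ) < n := by exact_mod_cast hn
    have haz : (0:ℝ) < ‖Z‖ ^ 2 := lt_of_lt_of_le (by positivity) ha
    set m : ℝ := (n : ℝ) / 2 with hmdef
    have hm : 0 < m := by positivity
    have hm2 : -(n:ℝ) / 2 = -m := by rw [hmdef]; ring
    have hmn : -(n:ℝ) = 2 * (-m) := by rw [hmdef]; ring
    set x : ℝ := ‖Z‖ ^ 2 / (4 * τ) with hxdef
    have hx : 0 < x := by positivity
    have key := rpow_mul_exp_neg_le x m hx hm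
    have hxx : x ^ (-m) * x ^ m = 1 := by
      rw [← Real.rpow_add hx]; simp
    have hexp : Real.exp (-(‖Z‖ ^ 2) / (4 * τ)) ≤ m ^ m * Real.exp (-m) * x ^ (-m) := by
      have hne : Real.exp (-(‖Z‖ ^ 2) / (4 * τ)) = Real.exp (-x) := by
        rw [hxdef, neg_div]
      rw [hne]
      calc Real.exp (-x) = x ^ (-m) * (x ^ m * Real.exp (-x)) := by
            rw [← mul_assoc, hxx, one_mul]
        _ ≤ x ^ (-m) * (m ^ m * Real.exp (-m)) := by
            exact mul_le_mul_of_nonneg_left key (Real.rpow_nonneg hx.le _)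
        _ = m ^ m * Real.exp (-m) * x ^ (-m) := by ring
    rw [hm2]
    have e1 : (4 * Real.pi * τ) * x = Real.pi * ‖Z‖ ^ 2 := by
      rw [hxdef]; field_simp
    have e2 : (4 * Real.pi * τ) ^ (-m) * x ^ (-m) = (Real.pi * ‖Z‖ ^ 2) ^ (-m) := by
      rw [← Real.mul_rpow (by positivity) hx.le, e1]
    have e3 : (Real.pi * ‖Z‖ ^ 2 / m) ^ (-m)
        = (Real.pi * ‖Z‖ ^ 2) ^ (-m) * m ^ m := by
      rw [div_eq_mul_inv, Real.mul_rpow (by positivity) (by positivity),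
        Real.inv_rpow hm.le, Real.rpow_neg hm.le, inv_inv]
    have hbase : 12 * Real.pi * (ε * r) ^ 2 ≤ Real.pi * ‖Z‖ ^ 2 / m := by
      rw [le_div_iff₀ hm]
      have h12 : 12 * Real.pi * (ε * r) ^ 2 * m = Real.pi * (6 * n * (ε * r) ^ 2) := by
        rw [hmdef]; ring
      rw [h12]
      exact mul_le_mul_of_nonneg_left ha Real.pi_pos.le
    have hmono : (Real.pi * ‖Z‖ ^ 2 / m) ^ (-m) ≤ (12 * Real.pi * (ε * r) ^ 2) ^ (-m) :=
      Real.rpow_le_rpow_of_nonpos (by positivity) hbase (by linarith)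
    calc (4 * Real.pi * τ) ^ (-m) * Real.exp (-(‖Z‖ ^ 2) / (4 * τ))
        ≤ (4 * Real.pi * τ) ^ (-m) * (m ^ m * Real.exp (-m) * x ^ (-m)) := by
          exact mul_le_mul_of_nonneg_left hexp (Real.rpow_nonneg (by positivity) _)
      _ = ((4 * Real.pi * τ) ^ (-m) * x ^ (-m)) * m ^ m * Real.exp (-m) := by ring
      _ = (Real.pi * ‖Z‖ ^ 2 / m) ^ (-m) * Real.exp (-m) := by rw [e2, ← e3]
      _ ≤ (12 * Real.pi * (ε * r) ^ 2) ^ (-m) * Real.exp (-m) := by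
          exact mul_le_mul_of_nonneg_right hmono (Real.exp_pos _).le
      _ = (12 * Real.pi) ^ (-m) * Real.exp (-m) * (ε * r) ^ (-(n:ℝ)) := by
          rw [Real.mul_rpow (by positivity) (by positivity), hmn,
            ← Real.rpow_natCast (ε * r) 2, ← Real.rpow_mul (by positivity)]
          norm_num
          ring
  · exact hC

/-- **Potential upper bound away from the support (E3).**
Fix `n ≥ 1`, `ε, δ > 0` with `ε/δ ≤ 1/√(6n)`, and `r > 0`.  Let `K` be compact, `μ` a
finite Borel measure supported in `K`.  If `(X,t)` satisfies, for every `(Y,s) ∈ K`,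
`max(|X − Y|, |t − s|^{1/2}) ≥ δr` and `t − s ≤ 3ε²r²`, then
`u(X,t) = ∫_K W(X−Y, t−s) dμ(Y,s) ≤ (12π)^{−n/2} e^{−n/2} (εr)^{−n} μ(K)`. -/
theorem potential_upper_bound_E3 (n : ℕ) (hn : 1 ≤ n)
    (ε δ : ℝ) (hε : 0 < ε) (hδ : 0 < δ) (hratio : ε / δ ≤ 1 / Real.sqrt (6 * n))
    (r : ℝ) (hr : 0 < r)
    (K : Set (EuclideanSpace ℝ (Fin n) × ℝ)) (hK : IsCompact K)
    (μ : Measure (EuclideanSpace ℝ (Fin n) × ℝ)) [IsFiniteMeasure μ] (hsupp : μ Kᶜ = 0)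
    (X : EuclideanSpace ℝ (Fin n)) (t : ℝ)
    (h : ∀ p ∈ K, δ * r ≤ max ‖X - p.1‖ (Real.sqrt |t - p.2|) ∧
      t - p.2 ≤ 3 * ε ^ 2 * r ^ 2) :
    ∫ p in K, heatW n (X - p.1) (t - p.2) ∂μ
      ≤ (12 * Real.pi) ^ (-(n : ℝ) / 2) * Real.exp (-(n : ℝ) / 2)
          * (ε * r) ^ (-(n : ℝ)) * (μ K).toReal := by
  set C : ℝ := (12 * Real.pi) ^ (-(n : ℝ) / 2) * Real.exp (-(n : ℝ) / 2)
      * (ε * r) ^ (-(n : ℝ)) with hCdef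
  have hC0 : 0 ≤ C := by rw [hCdef]; positivity
  have hn' : (1:ℝ) ≤ n := by exact_mod_cast hn
  -- `δ ≥ √(6n) ε`
  have hsq : 0 < Real.sqrt (6 * n) := Real.sqrt_pos.mpr (by positivity)
  have hδε : ε * Real.sqrt (6 * n) ≤ δ := by
    rw [div_le_div_iff₀ hδ hsq] at hratio
    linarith
  have hδ2 : 6 * (n:ℝ) * ε ^ 2 ≤ δ ^ 2 := by
    have h1 : (ε * Real.sqrt (6 * n)) ^ 2 ≤ δ ^ 2 := by
      have := mul_self_le_mul_self (by positivity) hδε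
      nlinarith
    rw [mul_pow, Real.sq_sqrt (by positivity : (0:ℝ) ≤ 6 * n)] at h1
    nlinarith
  have key : ∀ p ∈ K, ‖heatW n (X - p.1) (t - p.2)‖ ≤ C := by
    intro p hp
    obtain ⟨h1, h2⟩ := h p hp
    rw [Real.norm_eq_abs, abs_of_nonneg (heatW_nonneg n _ _)]
    by_cases hτ : 0 < t - p.2
    · -- the space part of the max must dominate
      have hspace : δ * r ≤ ‖X - p.1‖ := by
        rcases le_max_iff.mp h1 with hA | hB
        · exact hA
        · exfalso
          have habs : |t - p.2| = t - p.2 := abs_of_pos hτ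
          have : (δ * r) ^ 2 ≤ t - p.2 := by
            have h2' : δ * r ≤ Real.sqrt (t - p.2) := by rwa [habs] at hB
            have := (Real.le_sqrt (by positivity) hτ.le).mp h2'
            linarith
          nlinarith [sq_nonneg (ε * r)]
      have ha : 6 * n * (ε * r) ^ 2 ≤ ‖X - p.1‖ ^ 2 := by
        have h1' : (δ * r) ^ 2 ≤ ‖X - p.1‖ ^ 2 := by
          have := mul_self_le_mul_self (by positivity) hspace
          nlinarith
        nlinarith
      exact heatW_le n hn ε r hε hr _ _ ha
    · rw [heatW, if_neg hτ]; exact hC0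
  calc ∫ p in K, heatW n (X - p.1) (t - p.2) ∂μ
      ≤ |∫ p in K, heatW n (X - p.1) (t - p.2) ∂μ| := le_abs_self _
    _ = ‖∫ p in K, heatW n (X - p.1) (t - p.2) ∂μ‖ := (Real.norm_eq_abs _).symm
    _ ≤ C * (μ K).toReal :=
        norm_setIntegral_le_of_norm_le_const (measure_lt_top μ K) key
end
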